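/- If the points a₁, …, a_m in ℝⁿ are not collinear, then the Fermat–Torricelli problem minimize Σᵢ ‖x - aᵢ‖ has a unique optimal solution. -/

import Mathlib

theorem stmt_3 (n m : ℕ) (a : Fin m → EuclideanSpace ℝ (Fin n))
    (h : ¬ Collinear ℝ (Set.range a)) :
    ∃! x₀ : EuclideanSpace ℝ (Fin n), ∀ x, ∑ i, ‖x₀ - a i‖ ≤ ∑ i, ‖x - a i‖ := by
  set φ : EuclideanSpace ℝ (Fin n) → ℝ := fun x => ∑ i, ‖x - a i‖ with hφ
  show ∃! x₀, ∀ x, φ x₀ ≤ φ x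
  have hm : m ≠ 0 := by
    rintro rfl
    exact h (by simp [Set.range_eq_empty, collinear_empty])
  have hne' : Nonempty (Fin m) := ⟨⟨0, Nat.pos_of_ne_zero hm⟩⟩
  obtain ⟨i₀⟩ := hne'
  have hcont : Continuous φ :=
    continuous_finset_sum _ fun i _ => (continuous_id.sub continuous_const).norm
  have hterm : ∀ (x : EuclideanSpace ℝ (Fin n)) (i : Fin m), ‖x - a i‖ ≤ φ x := by
    intro x i
    exact Finset.single_le_sum (f := fun j => ‖x - a j‖)
      (fun j _ => norm_nonneg _) (Finset.mem_univ i)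
  have hcoer : ∀ᶠ x : EuclideanSpace ℝ (Fin n) in
      Filter.cocompact (EuclideanSpace ℝ (Fin n)), φ 0 ≤ φ x := by
    have ht := tendsto_norm_cocompact_atTop (E := EuclideanSpace ℝ (Fin n))
    filter_upwards [ht.eventually_ge_atTop (φ 0 + ‖a i₀‖)] with x hx
    have h1 : ‖x‖ - ‖a i₀‖ ≤ ‖x - a i₀‖ := norm_sub_norm_le _ _
    have h2 := hterm x i₀
    linarith
  obtain ⟨x₀, hx₀⟩ := hcont.exists_forall_le' (x₀ := 0) hcoer
  refine ⟨x₀, hx₀, ?_⟩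
  intro y hy
  by_contra hne
  have heq : φ y = φ x₀ := le_antisymm (hy x₀) (hx₀ y)
  set z : EuclideanSpace ℝ (Fin n) := (2⁻¹ : ℝ) • (y + x₀) with hz
  have hzi : ∀ i, z - a i = (2⁻¹ : ℝ) • ((y - a i) + (x₀ - a i)) := by
    intro i; rw [hz]; module
  have hub : ∀ i, ‖z - a i‖ ≤ 2⁻¹ * (‖y - a i‖ + ‖x₀ - a i‖) := by
    intro i
    rw [hzi i, norm_smul]
    have h3 := norm_add_le (y - a i) (x₀ - a i)
    have h2 : ‖(2⁻¹ : ℝ)‖ = (2⁻¹ : ℝ) := by norm_num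
    rw [h2]
    nlinarith [norm_nonneg ((y - a i) + (x₀ - a i))]
  have hsum : φ z = ∑ i, 2⁻¹ * (‖y - a i‖ + ‖x₀ - a i‖) := by
    have hle : φ z ≤ ∑ i, 2⁻¹ * (‖y - a i‖ + ‖x₀ - a i‖) :=
      Finset.sum_le_sum fun i _ => hub i
    have hval : ∑ i, 2⁻¹ * (‖y - a i‖ + ‖x₀ - a i‖) = φ y := by
      rw [← Finset.mul_sum, Finset.sum_add_distrib]
      change 2⁻¹ * (φ y + φ x₀) = φ y
      rw [heq]; ring
    have h4 := hy z
    linarith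
  have hall : ∀ i : Fin m, ‖z - a i‖ = 2⁻¹ * (‖y - a i‖ + ‖x₀ - a i‖) := by
    intro i
    exact (Finset.sum_eq_sum_iff_of_le (fun i _ => hub i)).1 hsum i (Finset.mem_univ i)
  have hray : ∀ i : Fin m, SameRay ℝ (y - a i) (x₀ - a i) := by
    intro i
    rw [sameRay_iff_norm_add]
    have h5 := hall i
    rw [hzi i, norm_smul] at h5
    have h2 : ‖(2⁻¹ : ℝ)‖ = (2⁻¹ : ℝ) := by norm_num
    rw [h2] at h5
    linarith
  apply h
  rw [collinear_iff_exists_forall_eq_smul_vadd]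
  refine ⟨x₀, y - x₀, ?_⟩
  rintro p ⟨i, rfl⟩
  rcases (hray i) with h0 | h0 | ⟨r₁, r₂, hr₁, hr₂, hr₁₂⟩
  · exact ⟨1, by rw [sub_eq_zero] at h0; rw [← h0]; simp⟩
  · exact ⟨0, by rw [sub_eq_zero] at h0; rw [← h0]; simp⟩
  · -- r₁ • (y - a i) = r₂ • (x₀ - a i), r₁, r₂ > 0
    have hd : r₂ - r₁ ≠ 0 := by
      intro hd0
      have : r₁ = r₂ := by linarith [sub_eq_zero.1 hd0]
      apply hne
      have h6 : r₁ • (y - a i) = r₁ • (x₀ - a i) := by rw [hr₁₂, this]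
      have h7 := smul_right_injective (EuclideanSpace ℝ (Fin n)) (ne_of_gt hr₁) h6
      have := sub_left_injective h7
      exact this
    refine ⟨-r₁ / (r₂ - r₁), ?_⟩
    have hkey : (r₂ - r₁) • (a i) = r₂ • x₀ - r₁ • y := by
      linear_combination (norm := module) hr₁₂
    rw [← inv_smul_smul₀ hd (a i), hkey]
    show _ = _ + _
    match_scalars <;> field_simp <;> ring
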